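/- Let G be a finite group with ω(G) = ω(G/Sol(G)) = 57. Then Z(G) = Sol(G). -/

import Mathlib

/-- A finset of group elements is pairwise non-commuting. -/
def pwNC {G : Type*} [Group G] (s : Finset G) : Prop :=
  (s : Set G).Pairwise fun a b => a * b ≠ b * a

/-- ω(G): the maximum size of a set of pairwise non-commuting elements of `G`. -/
noncomputable def omegaNC (G : Type*) [Group G] : ℕ :=
  sSup {n : ℕ | ∃ s : Finset G, pwNC s ∧ s.card = n}

lemma pwNC_bdd (G : Type*) [Group G] [Finite G] :
    BddAbove {n : ℕ | ∃ s : Finset G, pwNC s ∧ s.card = n} := by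
  have := Fintype.ofFinite G
  refine ⟨Fintype.card G, ?_⟩
  rintro n ⟨s, -, rfl⟩
  exact s.card_le_univ

lemma omega_attained (G : Type*) [Group G] [Finite G] :
    ∃ s : Finset G, pwNC s ∧ s.card = omegaNC G := by
  have h0 : (0:ℕ) ∈ {n : ℕ | ∃ s : Finset G, pwNC s ∧ s.card = n} :=
    ⟨∅, by simp [pwNC], rfl⟩
  exact Nat.sSup_mem ⟨0, h0⟩ (pwNC_bdd G)

/-- Let G be a finite group with ω(G) = ω(G/Sol(G)) = 57, where S = Sol(G) is
the solvable radical of G. Then Z(G) = Sol(G). -/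
theorem stmt14 {G : Type*} [Group G] [Finite G]
    (S : Subgroup G) [S.Normal] (hSsol : IsSolvable S)
    (hSmax : ∀ N : Subgroup G, N.Normal → IsSolvable N → N ≤ S)
    (hG : omegaNC G = 57) (hQ : omegaNC (G ⧸ S) = 57) :
    Subgroup.center G = S := by
  classical
  apply le_antisymm
  · exact hSmax _ inferInstance (isSolvable_of_comm (fun a b => Subtype.ext (Subgroup.mem_center_iff.mp b.2 a)))
  · intro s hs
    rw [Subgroup.mem_center_iff]
    by_contra hc
    push_neg at hc
    obtain ⟨z, hz⟩ := hc
    -- hz : z * s ≠ s * z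
    obtain ⟨t, ht, htc⟩ := omega_attained (G ⧸ S)
    rw [hQ] at htc
    choose f hf using QuotientGroup.mk_surjective (s := S)
    set r : G ⧸ S → G := fun q => if z * f q ≠ f q * z then f q else s * f q with hr
    have hmk_s : ((s : G) : G ⧸ S) = 1 := (QuotientGroup.eq_one_iff s).mpr hs
    have hrq : ∀ q, ((r q : G) : G ⧸ S) = q := by
      intro q
      by_cases h : z * f q ≠ f q * z
      · simp [hr, h, hf]
      · push_neg at h
        show ((if z * f q ≠ f q * z then f q else s * f q : G) : G ⧸ S) = q
        rw [if_neg (not_not.mpr h), QuotientGroup.mk_mul, hmk_s, one_mul, hf]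
    have hzr : ∀ q, z * r q ≠ r q * z := by
      intro q
      by_cases h : z * f q ≠ f q * z
      · show z * (if z * f q ≠ f q * z then f q else s * f q) ≠ (if z * f q ≠ f q * z then f q else s * f q) * z
        rw [if_pos h]; exact h
      · push_neg at h
        simp only [hr, if_neg (not_not.mpr h)]
        intro hcon
        apply hz
        have : z * s * f q = s * z * f q := by
          calc z * s * f q = z * (s * f q) := mul_assoc _ _ _
            _ = (s * f q) * z := hcon
            _ = s * (f q * z) := mul_assoc _ _ _
            _ = s * (z * f q) := by rw [← h]
            _ = s * z * f q := (mul_assoc _ _ _).symm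
        exact mul_right_cancel this
    have hrinj : Set.InjOn r ↑t := by
      intro a _ b _ hab
      rw [← hrq a, ← hrq b, hab]
    set u : Finset G := insert z (t.image r) with hu
    have hznot : z ∉ t.image r := by
      intro hmem
      obtain ⟨q, -, hq⟩ := Finset.mem_image.mp hmem
      exact hzr q (by rw [hq])
    have hucard : u.card = 58 := by
      rw [hu, Finset.card_insert_of_notMem hznot, Finset.card_image_of_injOn hrinj, htc]
    have hupw : pwNC u := by
      intro a ha b hb hab
      simp only [hu, Finset.coe_insert, Set.mem_insert_iff, Finset.coe_image,
        Set.mem_image, Finset.mem_coe] at ha hb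
      rcases ha with rfl | ⟨q1, hq1, rfl⟩
      · rcases hb with rfl | ⟨q2, hq2, rfl⟩
        · exact absurd rfl hab
        · exact hzr q2
      · rcases hb with rfl | ⟨q2, hq2, rfl⟩
        · exact fun h => hzr q1 h.symm
        · have hq12 : q1 ≠ q2 := by
            intro h; exact hab (by rw [h])
          have := ht hq1 hq2 hq12
          intro h
          apply this
          have hmk : ((r q1 * r q2 : G) : G ⧸ S) = ((r q2 * r q1 : G) : G ⧸ S) := by
            rw [h]
          simpa [QuotientGroup.mk_mul, hrq] using hmk
    have h58 : (58 : ℕ) ∈ {n : ℕ | ∃ s : Finset G, pwNC s ∧ s.card = n} :=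
      ⟨u, hupw, hucard⟩
    have := le_csSup (pwNC_bdd G) h58
    rw [show sSup {n : ℕ | ∃ s : Finset G, pwNC s ∧ s.card = n} = omegaNC G from rfl,
      hG] at this
    omega
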